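/- In an e-ring, if g ∈ E⁺, p is a projection, and g ≤ n·p for some positive integer n, then g = gp = pg. -/
import Mathlib


/-- An e-ring: an associative unital ring `R` together with a set `E` of effects.
`E⁺` is the additive submonoid generated by `E` (the set of finite sums of effects). -/
structure ERing (R : Type*) [Ring R] where
  E : Set R
  zero_mem : (0:R) ∈ E
  one_mem : (1:R) ∈ E
  compl_mem : ∀ e ∈ E, 1 - e ∈ E
  ax_i : ∀ a ∈ AddSubmonoid.closure E, -a ∈ AddSubmonoid.closure E → a = 0
  ax_ii : ∀ a ∈ AddSubmonoid.closure E, 1 - a ∈ AddSubmonoid.closure E → a ∈ E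
  ax_iii : ∀ a ∈ AddSubmonoid.closure E, ∀ b ∈ AddSubmonoid.closure E,
    a * b = b * a → a * b ∈ AddSubmonoid.closure E
  ax_iv : ∀ a ∈ AddSubmonoid.closure E, ∀ b ∈ AddSubmonoid.closure E,
    a * b * a ∈ AddSubmonoid.closure E
  ax_v : ∀ a ∈ AddSubmonoid.closure E, ∀ b ∈ AddSubmonoid.closure E,
    a * b * a = 0 → a * b = 0 ∧ b * a = 0
  ax_vi : ∀ a ∈ AddSubmonoid.closure E, ∀ b ∈ AddSubmonoid.closure E,
    (a - b) * (a - b) ∈ AddSubmonoid.closure E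

namespace ERing

variable {R : Type*} [Ring R]

/-- The positive cone `E⁺`: all finite sums of effects. -/
def Ep (S : ERing R) : Set R := (AddSubmonoid.closure S.E : Set R)

/-- The directed group `G = E⁺ − E⁺` (as a subset of `R`). -/
def G (S : ERing R) : Set R := {x | ∃ a ∈ S.Ep, ∃ b ∈ S.Ep, x = a - b}

/-- The partial order with positive cone `E⁺`: `g ≤ h` iff `h − g ∈ E⁺`. -/
def le (S : ERing R) (g h : R) : Prop := h - g ∈ S.Ep

/-- The set of projections: idempotent elements of `G`. -/
def P (S : ERing R) : Set R := {p | p ∈ S.G ∧ p * p = p}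

end ERing

theorem stmt6 {R : Type*} [Ring R] (S : ERing R) :
    ∀ g ∈ S.Ep, ∀ p ∈ S.P, ∀ n : ℕ, 0 < n → S.le g (n • p) →
      g = g * p ∧ g = p * g := by
  intro g hg p hp n hn hle
  obtain ⟨⟨a, ha, b, hb, hab⟩, hpp⟩ := hp
  have h1 : (1:R) ∈ AddSubmonoid.closure S.E := AddSubmonoid.subset_closure S.one_mem
  have hq : (1 - p) ∈ AddSubmonoid.closure S.E := by
    have h2 := S.ax_vi (1 + b) (AddSubmonoid.add_mem _ h1 hb) a ha
    have heq : (1 + b) - a = 1 - p := by rw [hab]; abel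
    rw [heq] at h2
    have hid : (1 - p) * (1 - p) = 1 - p := by
      have : (1-p)*(1-p) = 1 - p - p + p*p := by noncomm_ring
      rw [this, hpp]; abel
    rwa [hid] at h2
  have hh : (n • p : R) - g ∈ AddSubmonoid.closure S.E := hle
  have hqp : (1-p)*p = 0 := by rw [sub_mul, one_mul, hpp, sub_self]
  have key : (1-p)*((n • p : R) - g)*(1-p) = -((1-p)*g*(1-p)) := by
    rw [mul_sub ((1:R)-p) (n • p) g, mul_smul_comm, hqp, smul_zero, zero_sub, neg_mul]
  have hmem := S.ax_iv (1-p) hq ((n • p : R) - g) hh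
  rw [key] at hmem
  have hzero : (1-p)*g*(1-p) = 0 :=
    S.ax_i _ (S.ax_iv (1-p) hq g hg) hmem
  obtain ⟨hl, hr⟩ := S.ax_v (1-p) hq g hg hzero
  constructor
  · have : g * (1-p) = 0 := hr
    rw [mul_sub, mul_one, sub_eq_zero] at this
    exact this
  · have : (1-p) * g = 0 := hl
    rw [sub_mul, one_mul, sub_eq_zero] at this
    exact this
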